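/- Let X be a real T×k₁ matrix, Z a real T×k₂ matrix, and Y ∈ ℝ^T. Let U = [X Z] denote the T×(k₁+k₂) matrix obtained by horizontally concatenating the columns of X and Z, and let M = I_T − Z(ZᵀZ)⁻¹Zᵀ. If UᵀU, ZᵀZ and XᵀMX are all invertible, then the first k₁ coordinates of the joint least-squares coefficient vector δ̂ = (UᵀU)⁻¹UᵀY coincide with the vector γ̂ = (XᵀMX)⁻¹XᵀMY. -/

import Mathlib

open Matrix

/-- Frisch–Waugh–Lovell partitioned regression: the first block of the joint OLS
coefficient vector from regressing `Y` on `U = [X Z]` equals the residualized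
estimator `(XᵀMX)⁻¹XᵀMY` where `M = I − Z(ZᵀZ)⁻¹Zᵀ`. -/
theorem stmt_1 (T k₁ k₂ : ℕ)
    (X : Matrix (Fin T) (Fin k₁) ℝ) (Z : Matrix (Fin T) (Fin k₂) ℝ) (Y : Fin T → ℝ)
    (U : Matrix (Fin T) (Fin k₁ ⊕ Fin k₂) ℝ) (hUdef : U = Matrix.fromCols X Z)
    (M : Matrix (Fin T) (Fin T) ℝ) (hM : M = 1 - Z * (Zᵀ * Z)⁻¹ * Zᵀ)
    (hU : IsUnit (Uᵀ * U).det)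
    (hZ : IsUnit (Zᵀ * Z).det)
    (hX : IsUnit (Xᵀ * M * X).det) :
    ∀ i : Fin k₁,
      (((Uᵀ * U)⁻¹ * Uᵀ) *ᵥ Y) (Sum.inl i) = (((Xᵀ * M * X)⁻¹ * Xᵀ * M) *ᵥ Y) i := by
  set δ : Fin k₁ ⊕ Fin k₂ → ℝ := ((Uᵀ * U)⁻¹ * Uᵀ) *ᵥ Y with hδ
  set γv : Fin k₁ → ℝ := fun i => δ (Sum.inl i) with hγ
  set βv : Fin k₂ → ℝ := fun j => δ (Sum.inr j) with hβ
  have hsplit : δ = Sum.elim γv βv := by funext x; cases x <;> rfl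
  have hnorm : (Uᵀ * U) *ᵥ δ = Uᵀ *ᵥ Y := by
    rw [hδ, mulVec_mulVec, ← Matrix.mul_assoc, Matrix.mul_nonsing_inv _ hU, Matrix.one_mul]
  have hUδ : U *ᵥ δ = X *ᵥ γv + Z *ᵥ βv := by
    rw [hsplit, hUdef, fromCols_mulVec_sumElim]
  have hUt : ∀ v : Fin T → ℝ, Uᵀ *ᵥ v = Sum.elim (Xᵀ *ᵥ v) (Zᵀ *ᵥ v) := fun v => by
    rw [hUdef, transpose_fromCols, fromRows_mulVec]
  have hnorm' : Sum.elim (Xᵀ *ᵥ (X *ᵥ γv + Z *ᵥ βv)) (Zᵀ *ᵥ (X *ᵥ γv + Z *ᵥ βv))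
      = Sum.elim (Xᵀ *ᵥ Y) (Zᵀ *ᵥ Y) := by
    rw [← hUt, ← hUt, ← hUδ, mulVec_mulVec, hnorm]
  have eq1 : Xᵀ *ᵥ (X *ᵥ γv + Z *ᵥ βv) = Xᵀ *ᵥ Y := by
    funext i; exact congrFun hnorm' (Sum.inl i)
  have eq2 : Zᵀ *ᵥ (X *ᵥ γv + Z *ᵥ βv) = Zᵀ *ᵥ Y := by
    funext j; exact congrFun hnorm' (Sum.inr j)
  -- solve for βv
  have hZZ : (Zᵀ * Z) *ᵥ βv = Zᵀ *ᵥ (Y - X *ᵥ γv) := by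
    rw [mulVec_sub, ← mulVec_mulVec]
    rw [mulVec_add] at eq2
    rw [eq_sub_iff_add_eq, add_comm, eq2]
  have hZβ : Z *ᵥ βv = (Z * (Zᵀ * Z)⁻¹ * Zᵀ) *ᵥ (Y - X *ᵥ γv) := by
    have hβsolve : βv = (Zᵀ * Z)⁻¹ *ᵥ (Zᵀ *ᵥ (Y - X *ᵥ γv)) := by
      rw [← hZZ, mulVec_mulVec, Matrix.nonsing_inv_mul _ hZ, one_mulVec]
    rw [hβsolve, mulVec_mulVec, mulVec_mulVec, Matrix.mul_assoc]
  -- derive the normal equation for γv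
  have hP : Z * (Zᵀ * Z)⁻¹ * Zᵀ = 1 - M := by rw [hM, sub_sub_cancel]
  have hkey : (Xᵀ * M * X) *ᵥ γv = (Xᵀ * M) *ᵥ Y := by
    rw [hZβ, hP] at eq1
    simp only [← mulVec_mulVec, Matrix.sub_mulVec, one_mulVec, mulVec_sub, mulVec_add] at eq1 ⊢
    linear_combination eq1
  have hγsolve : γv = ((Xᵀ * M * X)⁻¹ * Xᵀ * M) *ᵥ Y := by
    rw [Matrix.mul_assoc, ← mulVec_mulVec, ← hkey, mulVec_mulVec,
      Matrix.nonsing_inv_mul _ hX, one_mulVec]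
  intro i
  exact congrFun hγsolve i
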